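/- arXiv:1812.08762 — 6 statements merged into one kernel-verified Lean document; each statement's English description precedes it below -/
import Mathlib

section
/- Let {E_i} be a MIC with Gram matrix G. Then {E_i} is unbiased (tr(E_i) = 1/d for all i) if and only if the maximal eigenvalue of G equals 1/d. -/
open Matrix BigOperators ComplexOrder

/-- A MIC: `(card n) = d²` positive semidefinite operators on a `d`-dimensional
complex Hilbert space (with `d = card m`), summing to the identity and linearly
independent over the reals (equivalently, over the Hermitian operators). -/
def IsMIC {n m : Type*} [Fintype n] [Fintype m] [DecidableEq m]
    (E : n → Matrix m m ℂ) : Prop :=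
  Fintype.card n = (Fintype.card m) ^ 2 ∧ (∀ i, (E i).PosSemidef) ∧
    (∑ i, E i = 1) ∧ LinearIndependent ℝ E

/-- The Gram matrix of a MIC, `G i j = tr (E i * E j)` (real, since the operators
are positive semidefinite). -/
noncomputable def gram {n m : Type*} [Fintype n] [Fintype m]
    (E : n → Matrix m m ℂ) : Matrix n n ℝ :=
  Matrix.of fun i j => ((E i * E j).trace).re

/-- Trace of a product of PSD matrices has nonnegative real part. -/
lemma trace_mul_re_nonneg {m : Type*} [Fintype m] [DecidableEq m]
    {A B : Matrix m m ℂ} (hA : A.PosSemidef) (hB : B.PosSemidef) :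
    0 ≤ ((A * B).trace).re := by
  obtain ⟨C, hC⟩ : ∃ C : Matrix m m ℂ, B = Cᴴ * C := by
    open scoped MatrixOrder in
    simpa [star_eq_conjTranspose] using CStarAlgebra.nonneg_iff_eq_star_mul_self.mp hB.nonneg
  have h1 : (A * B).trace = (C * A * Cᴴ).trace := by
    rw [hC, ← mul_assoc, Matrix.trace_mul_comm, ← mul_assoc]
  rw [h1]
  have hP : (C * A * Cᴴ).PosSemidef := hA.mul_mul_conjTranspose_same C
  rw [Matrix.trace]
  have hnn : ∀ i, 0 ≤ ((C * A * Cᴴ) i i).re := by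
    intro i
    have := hP.dotProduct_mulVec_nonneg (Pi.single i 1)
    have h : 0 ≤ (C * A * Cᴴ) i i := by
      simpa [mulVec, dotProduct, Pi.single_apply] using this
    exact (Complex.le_def.mp h).1
  simpa [Matrix.diag, Complex.re_sum] using Finset.sum_nonneg fun i _ => hnn i

/-- Quadratic form bound via eigenvalue upper bounds, over ℝ. -/
lemma quad_le_of_eigenvalues_le {n : Type*} [Fintype n] [DecidableEq n]
    {A : Matrix n n ℝ} (hA : A.IsHermitian) {c : ℝ}
    (hc : ∀ i, hA.eigenvalues i ≤ c) (x : n → ℝ) :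
    x ⬝ᵥ (A *ᵥ x) ≤ c * (x ⬝ᵥ x) := by
  set U : Matrix n n ℝ := ↑hA.eigenvectorUnitary with hU
  set y : n → ℝ := star U *ᵥ x with hy
  have hspec : A = U * diagonal hA.eigenvalues * star U := by
    have := hA.spectral_theorem
    simpa [RCLike.ofReal_alg, Function.comp] using this
  have key : x ⬝ᵥ (A *ᵥ x) = y ⬝ᵥ (diagonal hA.eigenvalues *ᵥ y) := by
    conv_lhs => rw [hspec]
    rw [← mulVec_mulVec, ← mulVec_mulVec]
    rw [dotProduct_mulVec x U, ← transpose_transpose U, vecMul_transpose]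
    rfl
  have hyy : y ⬝ᵥ y = x ⬝ᵥ x := by
    rw [hy, dotProduct_comm, dotProduct_mulVec]
    have hstar : (star U : Matrix n n ℝ) = Uᵀ := rfl
    rw [hstar, vecMul_transpose, mulVec_mulVec]
    have hUU : U * Uᵀ = 1 := by
      have h2 : U * star U = 1 := (Unitary.mem_iff.mp hA.eigenvectorUnitary.2).2
      exact h2
    rw [hUU, one_mulVec, dotProduct_comm]
  calc x ⬝ᵥ (A *ᵥ x) = ∑ i, hA.eigenvalues i * (y i)^2 := by
        rw [key]; simp only [dotProduct, mulVec_diagonal]; congr 1; ext i; ring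
    _ ≤ ∑ i, c * (y i)^2 := Finset.sum_le_sum fun i _ =>
        mul_le_mul_of_nonneg_right (hc i) (sq_nonneg _)
    _ = c * (y ⬝ᵥ y) := by simp only [dotProduct, Finset.mul_sum]; congr 1; ext i; ring
    _ = c * (x ⬝ᵥ x) := by rw [hyy]

/-- Eigenvalue equals Rayleigh quotient at unit eigenvector, over ℝ. -/
lemma eig_eq_rayleigh {n : Type*} [Fintype n] [DecidableEq n]
    {A : Matrix n n ℝ} (hA : A.IsHermitian) (i : n) :
    hA.eigenvalues i = (⇑(hA.eigenvectorBasis i)) ⬝ᵥ (A *ᵥ ⇑(hA.eigenvectorBasis i)) := by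
  have := hA.eigenvalues_eq i
  simpa using this

lemma eigvec_unit {n : Type*} [Fintype n] [DecidableEq n]
    {A : Matrix n n ℝ} (hA : A.IsHermitian) (i : n) :
    (⇑(hA.eigenvectorBasis i)) ⬝ᵥ (⇑(hA.eigenvectorBasis i)) = 1 := by
  have h := hA.eigenvectorBasis.orthonormal.1 i
  have h2 : (inner ℝ (hA.eigenvectorBasis i) (hA.eigenvectorBasis i) : ℝ) = 1 := by
    rw [real_inner_self_eq_norm_sq, h]; norm_num
  rw [EuclideanSpace.inner_eq_star_dotProduct] at h2
  simpa [dotProduct_comm] using h2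

/-- AM-GM bound: quadratic form of a symmetric entrywise-nonnegative matrix with
constant row sums `c` is at most `c` times the squared norm. -/
lemma quad_le_of_rowsum {n : Type*} [Fintype n] (B : Matrix n n ℝ)
    (hnn : ∀ i j, 0 ≤ B i j) (hsymm : ∀ i j, B i j = B j i) {c : ℝ}
    (hrow : ∀ i, ∑ j, B i j = c) (v : n → ℝ) :
    v ⬝ᵥ (B *ᵥ v) ≤ c * (v ⬝ᵥ v) := by
  have step1 : v ⬝ᵥ (B *ᵥ v) = ∑ i, ∑ j, B i j * (v i * v j) := by
    simp only [dotProduct, mulVec, Finset.mul_sum]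
    congr 1; ext i; congr 1; ext j; ring
  have step2 : ∀ i j, B i j * (v i * v j) ≤ B i j * (((v i)^2 + (v j)^2) / 2) := by
    intro i j
    apply mul_le_mul_of_nonneg_left _ (hnn i j)
    nlinarith [sq_nonneg (v i - v j)]
  have S1 : ∑ i, ∑ j, B i j * (v i)^2 = c * ∑ i, (v i)^2 := by
    rw [Finset.mul_sum]
    congr 1; ext i
    rw [← Finset.sum_mul, hrow i]
  have S2 : ∑ i, ∑ j, B i j * (v j)^2 = c * ∑ i, (v i)^2 := by
    rw [Finset.sum_comm, Finset.mul_sum]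
    congr 1; ext j
    have : ∑ i, B i j = c := by
      rw [show ∑ i, B i j = ∑ i, B j i from Finset.sum_congr rfl fun i _ => hsymm i j,
        hrow j]
    rw [← Finset.sum_mul, this]
  calc v ⬝ᵥ (B *ᵥ v) = ∑ i, ∑ j, B i j * (v i * v j) := step1
    _ ≤ ∑ i, ∑ j, B i j * (((v i)^2 + (v j)^2) / 2) :=
        Finset.sum_le_sum fun i _ => Finset.sum_le_sum fun j _ => step2 i j
    _ = c * ∑ i, (v i)^2 := by
        have expand : ∑ i, ∑ j, B i j * (((v i)^2 + (v j)^2) / 2)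
            = ((∑ i, ∑ j, B i j * (v i)^2) + ∑ i, ∑ j, B i j * (v j)^2) / 2 := by
          simp_rw [add_div, Finset.sum_div, ← Finset.sum_add_distrib]
          refine Finset.sum_congr rfl fun i _ => Finset.sum_congr rfl fun j _ => by ring
        rw [expand, S1, S2]; ring
    _ = c * (v ⬝ᵥ v) := by congr 1; simp [dotProduct, sq]

/-- A MIC is unbiased iff the maximal eigenvalue of its Gram matrix is `1/d`. -/
theorem stmt1 {d : ℕ} (hd : 0 < d) (E : Fin (d ^ 2) → Matrix (Fin d) (Fin d) ℂ)
    (hMIC : IsMIC E) (hG : (gram E).IsHermitian) :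
    (∀ i, (E i).trace = (1 / d : ℂ)) ↔ (⨆ i, hG.eigenvalues i) = 1 / d := by
  obtain ⟨hcard, hpsd, hsum, hli⟩ := hMIC
  have hd' : (0:ℝ) < d := Nat.cast_pos.mpr hd
  haveI : Nonempty (Fin (d^2)) := ⟨⟨0, by positivity⟩⟩
  have hGnn : ∀ i j, 0 ≤ gram E i j := fun i j => trace_mul_re_nonneg (hpsd i) (hpsd j)
  have hGsymm : ∀ i j, gram E i j = gram E j i := by
    intro i j
    simp only [_root_.gram, Matrix.of_apply]
    rw [Matrix.trace_mul_comm]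
  have hrow : ∀ i, ∑ j, gram E i j = ((E i).trace).re := by
    intro i
    have h1 : ∑ j, (E i * E j).trace = (E i).trace := by
      rw [← Matrix.trace_sum, ← Finset.mul_sum, hsum, mul_one]
    calc ∑ j, gram E i j = (∑ j, (E i * E j).trace).re := by
          simp [_root_.gram, Complex.re_sum]
      _ = ((E i).trace).re := by rw [h1]
  have him : ∀ i, ((E i).trace).im = 0 := by
    intro i
    have h : star (E i).trace = (E i).trace := by
      rw [← Matrix.trace_conjTranspose, (hpsd i).1.eq]
    exact Complex.conj_eq_iff_im.mp h
  have htot : ∑ i, ((E i).trace).re = d := by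
    have h1 : ∑ i, (E i).trace = (d : ℂ) := by
      rw [← Matrix.trace_sum, hsum, Matrix.trace_one]
      simp
    calc ∑ i, ((E i).trace).re = (∑ i, (E i).trace).re := by simp [Complex.re_sum]
      _ = d := by rw [h1]; simp
  set o : Fin (d^2) → ℝ := fun _ => 1 with ho
  have hoo : o ⬝ᵥ o = (d:ℝ)^2 := by
    simp [ho, dotProduct]
  have hoGo : o ⬝ᵥ (gram E *ᵥ o) = (d:ℝ) := by
    calc o ⬝ᵥ (gram E *ᵥ o) = ∑ i, ∑ j, gram E i j := by
          simp [ho, dotProduct, mulVec]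
      _ = ∑ i, ((E i).trace).re := Finset.sum_congr rfl fun i _ => hrow i
      _ = d := htot
  have hbdd : BddAbove (Set.range fun i => hG.eigenvalues i) :=
    (Set.finite_range _).bddAbove
  -- sup ≥ 1/d always
  have hsup_ge : 1/(d:ℝ) ≤ ⨆ i, hG.eigenvalues i := by
    have hb := quad_le_of_eigenvalues_le hG
      (fun i => le_ciSup hbdd i) o
    rw [hoGo, hoo] at hb
    rw [div_le_iff₀ hd']
    set s := ⨆ i, hG.eigenvalues i
    nlinarith
  constructor
  · -- unbiased → sup = 1/d
    intro h
    have hrow' : ∀ i, ∑ j, gram E i j = 1/(d:ℝ) := by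
      intro i
      rw [hrow i, h i]
      simp [Complex.div_re]
    refine le_antisymm (ciSup_le fun k => ?_) hsup_ge
    have hray := eig_eq_rayleigh hG k
    have hunit := eigvec_unit hG k
    rw [hray]
    calc (⇑(hG.eigenvectorBasis k)) ⬝ᵥ (gram E *ᵥ ⇑(hG.eigenvectorBasis k))
        ≤ (1/(d:ℝ)) * ((⇑(hG.eigenvectorBasis k)) ⬝ᵥ (⇑(hG.eigenvectorBasis k))) :=
          quad_le_of_rowsum _ hGnn hGsymm hrow' _
      _ = 1/(d:ℝ) := by rw [hunit, mul_one]
  · -- sup = 1/d → unbiased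
    intro hsup i
    have hq : ∀ x : Fin (d^2) → ℝ, x ⬝ᵥ (gram E *ᵥ x) ≤ (1/(d:ℝ)) * (x ⬝ᵥ x) := by
      intro x
      have := quad_le_of_eigenvalues_le hG
        (fun k => le_ciSup hbdd k) x
      rwa [hsup] at this
    set M : Matrix (Fin (d^2)) (Fin (d^2)) ℝ := (1/(d:ℝ)) • 1 - gram E with hM
    have hMherm : M.IsHermitian := by
      show Mᴴ = M
      rw [hM, conjTranspose_sub, conjTranspose_smul, conjTranspose_one, hG.eq, star_trivial]
    have hMpsd : M.PosSemidef := by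
      refine PosSemidef.of_dotProduct_mulVec_nonneg hMherm fun x => ?_
      have hx := hq x
      have hexp : star x ⬝ᵥ (M *ᵥ x) = (1/(d:ℝ)) * (x ⬝ᵥ x) - x ⬝ᵥ (gram E *ᵥ x) := by
        simp only [hM, Matrix.sub_mulVec, Matrix.smul_mulVec, Matrix.one_mulVec,
          dotProduct_sub, dotProduct_smul, star_trivial, smul_eq_mul]
      rw [hexp]
      linarith
    have hMo : star o ⬝ᵥ (M *ᵥ o) = 0 := by
      have hexp : star o ⬝ᵥ (M *ᵥ o) = (1/(d:ℝ)) * (o ⬝ᵥ o) - o ⬝ᵥ (gram E *ᵥ o) := by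
        simp only [hM, Matrix.sub_mulVec, Matrix.smul_mulVec, Matrix.one_mulVec,
          dotProduct_sub, dotProduct_smul, star_trivial, smul_eq_mul]
      rw [hexp, hoo, hoGo]
      field_simp
      ring
    have hM0 : M *ᵥ o = 0 := (hMpsd.dotProduct_mulVec_zero_iff o).mp hMo
    have hi : (M *ᵥ o) i = 0 := by rw [hM0]; rfl
    have hMvi : (M *ᵥ o) i = 1/(d:ℝ) - ((E i).trace).re := by
      have h1 : (M *ᵥ o) i = ∑ j, M i j := by simp [mulVec, dotProduct, ho]
      have h2 : ∑ j, M i j = ∑ j, ((1/(d:ℝ)) • (1 : Matrix (Fin (d^2)) (Fin (d^2)) ℝ)) i j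
          - ∑ j, gram E i j := by
        rw [← Finset.sum_sub_distrib]
        refine Finset.sum_congr rfl fun j _ => ?_
        simp [hM, Matrix.sub_apply]
      have h3 : ∑ j, ((1/(d:ℝ)) • (1 : Matrix (Fin (d^2)) (Fin (d^2)) ℝ)) i j = 1/(d:ℝ) := by
        simp [Matrix.smul_apply, Matrix.one_apply]
      rw [h1, h2, h3, hrow i]
    have hre : ((E i).trace).re = 1/(d:ℝ) := by
      rw [hMvi] at hi
      linarith
    have : (E i).trace = (((1/(d:ℝ)) : ℝ) : ℂ) := by
      apply Complex.ext
      · simpa using hre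
      · simpa using him i
    rw [this]
    push_cast
    ring
end

section
/- No outcome of a MIC can ever be assigned probability 1: for any MIC {E_i} and any density matrix ρ (positive semidefinite with unit trace), tr(ρ E_i) < 1 for every i. -/
open Matrix BigOperators ComplexOrder


lemma trace_ctm {d : ℕ} (M : Matrix (Fin d) (Fin d) ℂ) :
    (Mᴴ * M).trace = ((∑ j, ∑ i, Complex.normSq (M i j) : ℝ) : ℂ) := by
  simp only [Matrix.trace, Matrix.diag, Matrix.mul_apply, Matrix.conjTranspose_apply]
  push_cast
  simp [Complex.normSq_eq_conj_mul_self]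

open scoped MatrixOrder in
lemma psd_eq_ctm_aux {d : ℕ} {X : Matrix (Fin d) (Fin d) ℂ} (hX : X.PosSemidef) :
    ∃ R : Matrix (Fin d) (Fin d) ℂ, X = Rᴴ * R := by
  obtain ⟨Y, hY, -, hYX⟩ :=
    CFC.exists_sqrt_of_isSelfAdjoint_of_quasispectrumRestricts hX.isHermitian
      (QuasispectrumRestricts.nnreal_of_nonneg hX.nonneg)
  refine ⟨Y, ?_⟩
  rw [← hYX]
  have hYs : Yᴴ = Y := hY.star_eq
  rw [hYs]

lemma psd_trace_aux {d : ℕ} {A B : Matrix (Fin d) (Fin d) ℂ}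
    (hA : A.PosSemidef) (hB : B.PosSemidef) :
    ∃ r : ℝ, 0 ≤ r ∧ (A * B).trace = (r : ℂ) ∧ (r = 0 → A * B = 0) := by
  obtain ⟨R, hR⟩ := psd_eq_ctm_aux hA
  obtain ⟨S, hS⟩ := psd_eq_ctm_aux hB
  set M := S * Rᴴ with hM
  refine ⟨∑ j, ∑ i, Complex.normSq (M i j), ?_, ?_, ?_⟩
  · exact Finset.sum_nonneg fun j _ => Finset.sum_nonneg fun i _ => Complex.normSq_nonneg _
  · rw [← trace_ctm]
    have h1 : Mᴴ * M = R * (Sᴴ * (S * Rᴴ)) := by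
      simp [hM, Matrix.conjTranspose_mul, Matrix.mul_assoc]
    rw [h1, hR, hS]
    rw [Matrix.mul_assoc Rᴴ R, Matrix.trace_mul_comm Rᴴ (R * (Sᴴ * S))]
    simp [Matrix.mul_assoc]
  · intro hr
    have hM0 : M = 0 := by
      ext i j
      have h0 : ∀ j' ∈ Finset.univ, (0:ℝ) ≤ ∑ i', Complex.normSq (M i' j') :=
        fun j' _ => Finset.sum_nonneg fun i' _ => Complex.normSq_nonneg _
      have := (Finset.sum_eq_zero_iff_of_nonneg h0).mp hr j (Finset.mem_univ j)
      have := (Finset.sum_eq_zero_iff_of_nonneg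
        (fun i' _ => Complex.normSq_nonneg (M i' j))).mp this i (Finset.mem_univ i)
      simpa [Complex.normSq_eq_zero] using this
    have hMH : R * Sᴴ = 0 := by
      have : Mᴴ = 0 := by rw [hM0]; simp
      simpa [hM, Matrix.conjTranspose_mul] using this
    rw [hR, hS]
    calc Rᴴ * R * (Sᴴ * S) = Rᴴ * (R * Sᴴ) * S := by simp [Matrix.mul_assoc]
    _ = 0 := by rw [hMH]; simp

noncomputable def hermSub (d : ℕ) : Submodule ℝ (Matrix (Fin d) (Fin d) ℂ) where
  carrier := {A | A.IsHermitian}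
  add_mem' := fun ha hb => ha.add hb
  zero_mem' := Matrix.isHermitian_zero
  smul_mem' := fun c A hA => by
    show (c • A).IsHermitian
    unfold Matrix.IsHermitian at *
    rw [Matrix.conjTranspose_smul, star_trivial, hA]

noncomputable def hermToReal (d : ℕ) : hermSub d →ₗ[ℝ] Matrix (Fin d) (Fin d) ℝ where
  toFun A := Matrix.of fun i j => if i ≤ j then (A.1 i j).re else (A.1 j i).im
  map_add' A B := by
    ext i j
    by_cases h : i ≤ j <;> simp [h]
  map_smul' c A := by
    ext i j
    by_cases h : i ≤ j <;> simp [h, Complex.real_smul]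

lemma hermToReal_inj (d : ℕ) : Function.Injective (hermToReal d) := by
  rw [← LinearMap.ker_eq_bot, LinearMap.ker_eq_bot']
  intro A hA
  have hE : ∀ i j, (hermToReal d A) i j = 0 := fun i j => by rw [hA]; rfl
  have hH : ∀ i j, (starRingEnd ℂ) (A.1 j i) = A.1 i j := fun i j =>
    congrFun (congrFun A.2 i) j
  have key : ∀ i j : Fin d, i ≤ j → A.1 i j = 0 := by
    intro i j hij
    have hre : (A.1 i j).re = 0 := by simpa [hermToReal, hij] using hE i j
    rcases eq_or_lt_of_le hij with rfl | hlt
    · have h2 := congrArg Complex.im (hH i i)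
      rw [Complex.conj_im] at h2
      have him : (A.1 i i).im = 0 := by linarith
      exact Complex.ext hre (by simpa using him)
    · have him : (A.1 i j).im = 0 := by
        simpa [hermToReal, not_le.mpr hlt] using hE j i
      exact Complex.ext hre (by simpa using him)
  have : A.1 = 0 := by
    ext i j
    rcases le_or_gt i j with h | h
    · simpa using key i j h
    · have := hH i j
      rw [key j i h.le] at this
      simpa using this.symm
  exact Subtype.ext this

lemma finrank_hermSub_le (d : ℕ) : Module.finrank ℝ (hermSub d) ≤ d ^ 2 := by
  have := LinearMap.finrank_le_finrank_of_injective (hermToReal_inj d)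
  rwa [Module.finrank_matrix, Module.finrank_self, Fintype.card_fin, mul_one, ← pow_two] at this


lemma mulVec_sum {d : ℕ} {ι : Type*} (s : Finset ι) (M : ι → Matrix (Fin d) (Fin d) ℂ)
    (v : Fin d → ℂ) : (∑ j ∈ s, M j) *ᵥ v = ∑ j ∈ s, (M j) *ᵥ v := by
  induction s using Finset.cons_induction with
  | empty => simp [Matrix.zero_mulVec]
  | cons a s ha ih => simp [Finset.sum_cons, Matrix.add_mulVec, ih]

/-- No MIC outcome can ever be assigned probability 1: for every
density matrix `ρ` and every effect `E i`, `tr (ρ * E i) < 1`. -/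
theorem stmt7 {d : ℕ} (hd : 2 ≤ d) (E : Fin (d ^ 2) → Matrix (Fin d) (Fin d) ℂ)
    (hMIC : IsMIC E) (ρ : Matrix (Fin d) (Fin d) ℂ)
    (hρ : ρ.PosSemidef) (hρ1 : ρ.trace = 1) :
    ∀ i, ((ρ * E i).trace).re < 1 := by
  obtain ⟨hcard, hpsd, hsumE, hlin⟩ := hMIC
  intro i
  by_contra hcon
  push_neg at hcon
  choose r hr0 hrtr hrz using fun j => psd_trace_aux hρ (hpsd j)
  have hsum1 : ∑ j, (ρ * E j).trace = 1 := by
    rw [← Matrix.trace_sum, ← Matrix.mul_sum, hsumE, Matrix.mul_one, hρ1]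
  have hrsum : ∑ j, r j = 1 := by
    have h : ((∑ j, r j : ℝ) : ℂ) = 1 := by
      push_cast
      rw [← hsum1]
      exact Finset.sum_congr rfl fun j _ => (hrtr j).symm
    exact_mod_cast h
  have hri : (1 : ℝ) ≤ r i := by
    have h : ((ρ * E i).trace).re = r i := by rw [hrtr]; exact Complex.ofReal_re _
    rwa [h] at hcon
  have hrj0 : ∀ j, j ≠ i → r j = 0 := by
    have herase : ∑ j ∈ Finset.univ.erase i, r j = 1 - r i := by
      rw [← hrsum, Finset.sum_erase_eq_sub (Finset.mem_univ i)]
    have hnn : ∀ j ∈ Finset.univ.erase i, (0:ℝ) ≤ r j := fun j _ => hr0 j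
    have hle0 : ∑ j ∈ Finset.univ.erase i, r j = 0 := by
      have := Finset.sum_nonneg hnn
      linarith [herase]
    intro j hj
    exact (Finset.sum_eq_zero_iff_of_nonneg hnn).mp hle0 j
      (Finset.mem_erase.mpr ⟨hj, Finset.mem_univ j⟩)
  have hzero : ∀ j, j ≠ i → ρ * E j = 0 := fun j hj => hrz j (hrj0 j hj)
  have hEρ : ∀ j, j ≠ i → E j * ρ = 0 := by
    intro j hj
    have h := congrArg Matrix.conjTranspose (hzero j hj)
    rwa [Matrix.conjTranspose_mul, (hpsd j).isHermitian.eq, hρ.isHermitian.eq,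
      Matrix.conjTranspose_zero] at h
  have hEiρ : E i * ρ = ρ := by
    have h : ∑ j, E j * ρ = ρ := by rw [← Finset.sum_mul, hsumE, Matrix.one_mul]
    rwa [Finset.sum_eq_single i (fun j _ hj => hEρ j hj)
      (fun h => absurd (Finset.mem_univ i) h)] at h
  -- a nonzero column of ρ
  have hρne : ∃ k l, ρ k l ≠ 0 := by
    by_contra h
    push_neg at h
    have : ρ = 0 := Matrix.ext fun k l => h k l
    rw [this] at hρ1
    simp at hρ1
  obtain ⟨k, l, hkl⟩ := hρne
  set ψ : Fin d → ℂ := fun a => ρ a l with hψ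
  have hψk : ψ k ≠ 0 := hkl
  have hEjψ : ∀ j, j ≠ i → (E j) *ᵥ ψ = 0 := by
    intro j hj
    funext a
    have h := congrFun (congrFun (hEρ j hj) a) l
    simpa [Matrix.mulVec, dotProduct, Matrix.mul_apply, hψ] using h
  have hEiψ : (E i) *ᵥ ψ = ψ := by
    funext a
    have h := congrFun (congrFun hEiρ a) l
    simpa [Matrix.mulVec, dotProduct, Matrix.mul_apply, hψ] using h
  -- a second index
  have : Nontrivial (Fin d) := ⟨⟨⟨0, by omega⟩, ⟨1, by omega⟩, by simp [Fin.ext_iff]⟩⟩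
  obtain ⟨a₁, ha₁⟩ := exists_ne k
  set u : ℂ := ψ k with hu
  set v : ℂ := ψ a₁ with hv
  set φ : Fin d → ℂ := fun a =>
    if a = k then -((starRingEnd ℂ) v) else if a = a₁ then (starRingEnd ℂ) u else 0 with hφ
  have hφk : φ k = -((starRingEnd ℂ) v) := by simp [hφ]
  have hφa₁ : φ a₁ = (starRingEnd ℂ) u := by simp [hφ, ha₁]
  have hφ0 : ∀ a, a ≠ k → a ≠ a₁ → φ a = 0 := fun a h1 h2 => by simp [hφ, h1, h2]
  set A : Matrix (Fin d) (Fin d) ℂ :=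
    Matrix.of fun a b => φ a * (starRingEnd ℂ) (ψ b) + ψ a * (starRingEnd ℂ) (φ b) with hA
  have hAH : A.IsHermitian := by
    ext a b
    simp only [Matrix.conjTranspose_apply, hA, Matrix.of_apply, star_add, star_mul',
      Complex.star_def, Complex.conj_conj]
    ring
  -- span of E is all Hermitian matrices
  have hspan : A ∈ Submodule.span ℝ (Set.range E) := by
    have hle : Submodule.span ℝ (Set.range E) ≤ hermSub d :=
      Submodule.span_le.mpr (by rintro B ⟨j, rfl⟩; exact (hpsd j).isHermitian)
    have hfr : Module.finrank ℝ (Submodule.span ℝ (Set.range E)) = d ^ 2 := by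
      rw [finrank_span_eq_card hlin, Fintype.card_fin]
    have heq : Submodule.span ℝ (Set.range E) = hermSub d :=
      Submodule.eq_of_le_of_finrank_le hle (by rw [hfr]; exact finrank_hermSub_le d)
    rw [heq]
    exact hAH
  obtain ⟨c, hc⟩ := Submodule.mem_span_range_iff_exists_fun ℝ |>.mp hspan
  -- compute A *ᵥ ψ two ways
  set s : ℝ := ∑ b, Complex.normSq (ψ b) with hs
  have hspos : 0 < s := by
    have h1 : Complex.normSq (ψ k) ≤ s :=
      Finset.single_le_sum (fun b _ => Complex.normSq_nonneg (ψ b)) (Finset.mem_univ k)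
    have h2 : 0 < Complex.normSq (ψ k) := Complex.normSq_pos.mpr hψk
    linarith
  have hsum2 : ∑ b, (starRingEnd ℂ) (φ b) * ψ b = 0 := by
    have hz : ∀ b ∈ Finset.univ, b ∉ ({k, a₁} : Finset (Fin d)) →
        (starRingEnd ℂ) (φ b) * ψ b = 0 := by
      intro b _ hb
      simp only [Finset.mem_insert, Finset.mem_singleton, not_or] at hb
      rw [hφ0 b hb.1 hb.2]
      simp
    rw [← Finset.sum_subset (Finset.subset_univ ({k, a₁} : Finset (Fin d))) hz,
      Finset.sum_pair ha₁.symm, hφk, hφa₁]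
    simp only [map_neg, Complex.conj_conj, ← hu, ← hv]
    ring
  have hsum3 : ∑ b, (starRingEnd ℂ) (ψ b) * ψ b = (s : ℂ) := by
    rw [hs]
    push_cast
    exact Finset.sum_congr rfl fun b _ => (Complex.normSq_eq_conj_mul_self).symm
  have hA1 : ∀ a, (A *ᵥ ψ) a = (s : ℂ) * φ a := by
    intro a
    have : (A *ᵥ ψ) a = φ a * (∑ b, (starRingEnd ℂ) (ψ b) * ψ b)
        + ψ a * (∑ b, (starRingEnd ℂ) (φ b) * ψ b) := by
      simp only [Matrix.mulVec, dotProduct, hA, Matrix.of_apply, add_mul,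
        Finset.sum_add_distrib, Finset.mul_sum]
      ring_nf
    rw [this, hsum2, hsum3]
    ring
  have hA2 : ∀ a, (A *ᵥ ψ) a = ((c i : ℝ) : ℂ) * ψ a := by
    intro a
    have h : A *ᵥ ψ = ∑ j, c j • ((E j) *ᵥ ψ) := by
      rw [← hc, mulVec_sum]
      exact Finset.sum_congr rfl fun j _ => Matrix.smul_mulVec (c j) (E j) ψ
    have h2 : ∑ j, c j • ((E j) *ᵥ ψ) = c i • ψ := by
      rw [Finset.sum_eq_single i
        (fun j _ hj => by rw [hEjψ j hj]; simp)
        (fun h => absurd (Finset.mem_univ i) h), hEiψ]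
    rw [h, h2]
    simp [Complex.real_smul]
  have e1 : (s : ℂ) * (starRingEnd ℂ) u = ((c i : ℝ) : ℂ) * v := by
    have := (hA1 a₁).symm.trans (hA2 a₁)
    rwa [hφa₁, ← hv] at this
  have e2 : (s : ℂ) * (-((starRingEnd ℂ) v)) = ((c i : ℝ) : ℂ) * u := by
    have := (hA1 k).symm.trans (hA2 k)
    rwa [hφk, ← hu] at this
  have e3 : (s : ℂ) * (-v) = ((c i : ℝ) : ℂ) * (starRingEnd ℂ) u := by
    have := congrArg (starRingEnd ℂ) e2
    simpa [_root_.map_mul, map_neg, Complex.conj_conj, Complex.conj_ofReal] using this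
  have e4 : ((s : ℂ) ^ 2 + ((c i : ℝ) : ℂ) ^ 2) * (starRingEnd ℂ) u = 0 := by
    linear_combination (s : ℂ) * e1 - ((c i : ℝ) : ℂ) * e3
  have hu0 : (starRingEnd ℂ) u ≠ 0 := by
    simpa using hψk
  have e5 : ((s : ℂ) ^ 2 + ((c i : ℝ) : ℂ) ^ 2) = 0 :=
    (mul_eq_zero.mp e4).resolve_right hu0
  have e6 : s ^ 2 + (c i) ^ 2 = 0 := by exact_mod_cast e5
  nlinarith [sq_nonneg (c i), hspos]
end

section
/- No effect of a MIC can be a nonzero orthogonal projector: if {E_i} is a MIC, then no E_i satisfies E_i² = E_i with E_i ≠ 0. -/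
set_option synthInstance.maxHeartbeats 1000000
set_option maxHeartbeats 1000000

open Matrix BigOperators ComplexOrder

section Aux

variable {d : ℕ}


noncomputable def phi1 (v : Fin d → ℂ) : Matrix (Fin d) (Fin d) ℂ →ₗ[ℂ] (Fin d → ℂ) where
  toFun A := A *ᵥ v
  map_add' A B := Matrix.add_mulVec A B v
  map_smul' c A := Matrix.smul_mulVec c A v

noncomputable def phi2 (v : Fin d → ℂ) : LinearMap.ker (phi1 v) →ₗ[ℂ] (Fin d → ℂ) where
  toFun A := star v ᵥ* (A : Matrix (Fin d) (Fin d) ℂ)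
  map_add' A B := Matrix.vecMul_add A.1 B.1 (star v)
  map_smul' c A := by
    simp only [Submodule.coe_smul, RingHom.id_apply]
    ext q
    simp [Matrix.vecMul, dotProduct, Finset.mul_sum]
    exact Finset.sum_congr rfl fun p _ => by ring

noncomputable def ell (v : Fin d → ℂ) : (Fin d → ℂ) →ₗ[ℂ] ℂ where
  toFun y := y ⬝ᵥ v
  map_add' A B := add_dotProduct A B v
  map_smul' c A := smul_dotProduct c A v

lemma phi1_surj {v : Fin d → ℂ} (hv : v ≠ 0) : Function.Surjective (phi1 v) := by
  intro x
  refine ⟨Matrix.of fun p q => (star v ⬝ᵥ v)⁻¹ * x p * star (v q), ?_⟩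
  have hvv : star v ⬝ᵥ v ≠ 0 := fun h => hv (dotProduct_star_self_eq_zero.mp h)
  ext p
  simp only [phi1, LinearMap.coe_mk, AddHom.coe_mk, Matrix.mulVec, dotProduct,
    Matrix.of_apply]
  have : ∑ q, (∑ i, star v i * v i)⁻¹ * x p * star (v q) * v q
      = (star v ⬝ᵥ v)⁻¹ * x p * (star v ⬝ᵥ v) := by
    simp only [dotProduct, Pi.star_apply, Finset.mul_sum, mul_assoc]
  simpa [dotProduct, Pi.star_apply] using this.trans (by field_simp)

lemma ker_ell_le_range_phi2 {v : Fin d → ℂ} (hv : v ≠ 0) :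
    LinearMap.ker (ell v) ≤ LinearMap.range (phi2 v) := by
  intro y hy
  have hyv : y ⬝ᵥ v = 0 := hy
  have hvv : star v ⬝ᵥ v ≠ 0 := fun h => hv (dotProduct_star_self_eq_zero.mp h)
  have hmem : (Matrix.of fun p q => (star v ⬝ᵥ v)⁻¹ * v p * y q) ∈ LinearMap.ker (phi1 v) := by
    show (_ : Matrix (Fin d) (Fin d) ℂ) *ᵥ v = 0
    ext p
    have h2 : ∑ q, (∑ i, star (v i) * v i)⁻¹ * v p * y q * v q
        = (∑ i, star (v i) * v i)⁻¹ * v p * (y ⬝ᵥ v) := by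
      simp only [dotProduct, Finset.mul_sum, mul_assoc]
    simp only [Matrix.mulVec, dotProduct, Matrix.of_apply, Pi.zero_apply,
      Pi.star_apply]
    rw [h2, hyv, mul_zero]
  refine ⟨⟨_, hmem⟩, ?_⟩
  ext q
  show ∑ p, star (v p) * ((star v ⬝ᵥ v)⁻¹ * v p * y q) = y q
  have : ∑ p, star (v p) * ((star v ⬝ᵥ v)⁻¹ * v p * y q)
      = (star v ⬝ᵥ v) * ((star v ⬝ᵥ v)⁻¹ * y q) := by
    simp only [dotProduct, Pi.star_apply, Finset.sum_mul]
    exact Finset.sum_congr rfl fun p _ => by ring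
  rw [this, ← mul_assoc, mul_inv_cancel₀ hvv, one_mul]

lemma finrank_ker_phi2 {v : Fin d → ℂ} (hv : v ≠ 0) :
    Module.finrank ℂ (LinearMap.ker (phi2 v)) + 2 * d ≤ d * d + 1 := by
  have h1 := LinearMap.finrank_range_add_finrank_ker (phi1 v)
  have hm : Module.finrank ℂ (Matrix (Fin d) (Fin d) ℂ) = d * d := by
    simp [Module.finrank_matrix]
  have hr1 : Module.finrank ℂ (LinearMap.range (phi1 v)) = d := by
    rw [LinearMap.range_eq_top.mpr (phi1_surj hv), finrank_top]
    simp [Module.finrank_pi]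
  have h2 := LinearMap.finrank_range_add_finrank_ker (phi2 v)
  have h3 : Module.finrank ℂ (LinearMap.ker (ell v))
      ≤ Module.finrank ℂ (LinearMap.range (phi2 v)) :=
    Submodule.finrank_mono (ker_ell_le_range_phi2 hv)
  have h4 := LinearMap.finrank_range_add_finrank_ker (ell v)
  have h5 : Module.finrank ℂ (LinearMap.range (ell v)) ≤ 1 := by
    simpa using Submodule.finrank_le (LinearMap.range (ell v))
  rw [hm, hr1] at h1
  rw [Module.finrank_pi] at h4
  simp only [Fintype.card_fin] at h4
  omega

/-- Hermitian matrices annihilating `v`, as a real submodule. -/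
noncomputable def WH (v : Fin d → ℂ) : Submodule ℝ (Matrix (Fin d) (Fin d) ℂ) where
  carrier := {A | Aᴴ = A ∧ A *ᵥ v = 0}
  add_mem' := by
    rintro A B ⟨hA1, hA2⟩ ⟨hB1, hB2⟩
    exact ⟨by rw [Matrix.conjTranspose_add, hA1, hB1],
      by rw [Matrix.add_mulVec, hA2, hB2, add_zero]⟩
  zero_mem' := ⟨by simp, by simp⟩
  smul_mem' := by
    rintro r A ⟨hA1, hA2⟩
    constructor
    · have : (r • A)ᴴ = r • Aᴴ := by
        ext p q
        simp [Matrix.conjTranspose_apply]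
      rw [this, hA1]
    · rw [Matrix.smul_mulVec, hA2, smul_zero]

lemma WH_vecMul {v : Fin d → ℂ} {A : Matrix (Fin d) (Fin d) ℂ} (hA : A ∈ WH v) :
    star v ᵥ* A = 0 := by
  have h1 : star v ᵥ* Aᴴ = 0 := by
    rw [← Matrix.star_mulVec, hA.2, star_zero]
  rwa [hA.1] at h1

lemma vecMul_smulM {v : Fin d → ℂ} (c : ℂ) (A : Matrix (Fin d) (Fin d) ℂ) :
    star v ᵥ* (c • A) = c • (star v ᵥ* A) := by
  ext q
  simp only [Matrix.vecMul, dotProduct, Pi.smul_apply, Matrix.smul_apply, smul_eq_mul,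
    Finset.mul_sum]
  exact Finset.sum_congr rfl fun p _ => by ring

lemma mem_ker_phi1_of_WH {v : Fin d → ℂ} {A B : Matrix (Fin d) (Fin d) ℂ}
    (hA : A ∈ WH v) (hB : B ∈ WH v) :
    A + Complex.I • B ∈ LinearMap.ker (phi1 v) := by
  show (A + Complex.I • B) *ᵥ v = 0
  rw [Matrix.add_mulVec, Matrix.smul_mulVec, hA.2, hB.2, smul_zero, add_zero]

lemma mem_ker_phi2_of_WH {v : Fin d → ℂ} {A B : Matrix (Fin d) (Fin d) ℂ}
    (hA : A ∈ WH v) (hB : B ∈ WH v) :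
    (⟨A + Complex.I • B, mem_ker_phi1_of_WH hA hB⟩ : LinearMap.ker (phi1 v))
      ∈ LinearMap.ker (phi2 v) := by
  show star v ᵥ* (A + Complex.I • B) = 0
  rw [Matrix.vecMul_add, WH_vecMul hA, vecMul_smulM, WH_vecMul hB, smul_zero, add_zero]

noncomputable def psi (v : Fin d → ℂ) :
    (WH v × WH v) →ₗ[ℝ] (LinearMap.ker (phi2 v)) where
  toFun AB := ⟨⟨AB.1.1 + Complex.I • AB.2.1, mem_ker_phi1_of_WH AB.1.2 AB.2.2⟩,
    mem_ker_phi2_of_WH AB.1.2 AB.2.2⟩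
  map_add' AB CD := by
    apply Subtype.ext; apply Subtype.ext
    simp only [Prod.fst_add, Prod.snd_add, Submodule.coe_add, Submodule.coe_smul, smul_add]
    abel
  map_smul' r AB := by
    apply Subtype.ext; apply Subtype.ext
    simp only [Submodule.coe_smul_of_tower, Submodule.coe_add, Submodule.coe_smul,
      RingHom.id_apply, smul_add, smul_comm Complex.I r, Prod.smul_fst, Prod.smul_snd]

lemma psi_zero (v : Fin d → ℂ) : ∀ AB, psi v AB = 0 → AB = 0 := by
  rintro ⟨A, B⟩ h
  have h0 : (A : Matrix (Fin d) (Fin d) ℂ) + Complex.I • (B : Matrix (Fin d) (Fin d) ℂ) = 0 := by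
    have h1 := Subtype.ext_iff.mp h
    have h2 := Subtype.ext_iff.mp h1
    exact h2
  have h1 : (A : Matrix (Fin d) (Fin d) ℂ) - Complex.I • (B : Matrix (Fin d) (Fin d) ℂ) = 0 := by
    have := congrArg Matrix.conjTranspose h0
    rwa [Matrix.conjTranspose_add, Matrix.conjTranspose_smul, Complex.star_def,
      Complex.conj_I, A.2.1, B.2.1, Matrix.conjTranspose_zero, neg_smul,
      ← sub_eq_add_neg] at this
  have hA : (A : Matrix (Fin d) (Fin d) ℂ) = 0 := by
    have h2 := congrArg₂ (· + ·) h0 h1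
    simp only [add_zero] at h2
    have : (2 : ℂ) • (A : Matrix (Fin d) (Fin d) ℂ) = 0 := by
      rw [two_smul]
      linear_combination (norm := abel) h2
    simpa [smul_eq_zero] using this
  have hB : (B : Matrix (Fin d) (Fin d) ℂ) = 0 := by
    rw [hA, zero_add, smul_eq_zero] at h0
    rcases h0 with h | h
    · exact absurd h Complex.I_ne_zero
    · exact h
  ext : 2 <;> simp [hA, hB]

lemma psi_injective (v : Fin d → ℂ) : Function.Injective (psi v) := fun x y h => by
  have := psi_zero v (x - y) (by rw [map_sub, h, sub_self])
  exact sub_eq_zero.mp this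

lemma finrank_WH_le {v : Fin d → ℂ} (hv : v ≠ 0) :
    Module.finrank ℝ (WH v) ≤ Module.finrank ℂ (LinearMap.ker (phi2 v)) := by
  haveI : FiniteDimensional ℝ (Matrix (Fin d) (Fin d) ℂ) := Module.Finite.trans ℂ _
  haveI : FiniteDimensional ℝ (LinearMap.ker (phi2 v)) := Module.Finite.trans ℂ _
  have hinj := LinearMap.finrank_le_finrank_of_injective (psi_injective v)
  rw [Module.finrank_prod] at hinj
  have hmul : Module.finrank ℝ (LinearMap.ker (phi2 v))
      = 2 * Module.finrank ℂ (LinearMap.ker (phi2 v)) :=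
    finrank_real_of_complex (LinearMap.ker (phi2 v))
  omega


end Aux

/-- No effect of a MIC can be a nonzero (unscaled) projector. -/
theorem stmt8 {d : ℕ} (hd : 2 ≤ d) (E : Fin (d ^ 2) → Matrix (Fin d) (Fin d) ℂ)
    (hMIC : IsMIC E) :
    ∀ i, ¬ (E i * E i = E i ∧ E i ≠ 0) := by
  obtain ⟨hcard, hpsd, hsum, hli⟩ := hMIC
  rintro i ⟨hP2, hP0⟩
  -- find a fixed vector of the projector `E i`
  have hx : ∃ x, E i *ᵥ x ≠ 0 := by
    by_contra h
    push_neg at h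
    apply hP0
    ext p q
    have := congrFun (h (Pi.single q 1)) p
    simpa [Matrix.mulVec_single] using this
  obtain ⟨x, hx⟩ := hx
  set v : Fin d → ℂ := E i *ᵥ x with hvdef
  have hv : v ≠ 0 := hx
  have hPv : E i *ᵥ v = v := by rw [hvdef, Matrix.mulVec_mulVec, hP2]
  -- all other effects annihilate `v`
  have hdotsum : ∀ f : Fin (d ^ 2) → (Fin d → ℂ),
      star v ⬝ᵥ (∑ j, f j) = ∑ j, star v ⬝ᵥ f j := by
    intro f
    simp only [dotProduct, Finset.sum_apply, Finset.mul_sum]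
    rw [Finset.sum_comm]
  have hsum' : ∑ j, star v ⬝ᵥ (E j *ᵥ v) = star v ⬝ᵥ v := by
    rw [← hdotsum]
    have : (∑ j, E j *ᵥ v) = (∑ j, E j) *ᵥ v := (map_sum (phi1 v) E Finset.univ).symm
    rw [this, hsum, Matrix.one_mulVec]
  have hzero : ∑ j ∈ Finset.univ.erase i, star v ⬝ᵥ (E j *ᵥ v) = 0 := by
    have h1 := Finset.add_sum_erase Finset.univ (fun j => star v ⬝ᵥ (E j *ᵥ v))
      (Finset.mem_univ i)
    simp only [hPv] at h1
    rw [hsum'] at h1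
    exact add_eq_left.mp h1
  have hker : ∀ j, j ≠ i → E j *ᵥ v = 0 := by
    intro j hj
    have hnn : ∀ k ∈ Finset.univ.erase i, (0:ℂ) ≤ star v ⬝ᵥ (E k *ᵥ v) :=
      fun k _ => (hpsd k).dotProduct_mulVec_nonneg v
    have := (Finset.sum_eq_zero_iff_of_nonneg hnn).mp hzero j
      (Finset.mem_erase.mpr ⟨hj, Finset.mem_univ j⟩)
    exact ((hpsd j).dotProduct_mulVec_zero_iff v).mp this
  -- the effects all live in a small submodule
  haveI : FiniteDimensional ℝ (Matrix (Fin d) (Fin d) ℂ) := Module.Finite.trans ℂ _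
  set S : Submodule ℝ (Matrix (Fin d) (Fin d) ℂ) := WH v ⊔ (ℝ ∙ E i) with hS
  have hmemS : ∀ j, E j ∈ S := by
    intro j
    by_cases hj : j = i
    · subst hj
      exact Submodule.mem_sup_right (Submodule.mem_span_singleton_self _)
    · exact Submodule.mem_sup_left ⟨(hpsd j).1, hker j hj⟩
  have hspan : Submodule.span ℝ (Set.range E) ≤ S :=
    Submodule.span_le.mpr (Set.range_subset_iff.mpr hmemS)
  have hd2 : Module.finrank ℝ (Submodule.span ℝ (Set.range E)) = d ^ 2 := by
    rw [finrank_span_eq_card hli, Fintype.card_fin]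
  have h6 : Module.finrank ℝ (Submodule.span ℝ (Set.range E)) ≤ Module.finrank ℝ S :=
    Submodule.finrank_mono hspan
  have h7 := Submodule.finrank_sup_add_finrank_inf_eq (WH v) (ℝ ∙ E i)
  have h8 : Module.finrank ℝ (ℝ ∙ E i) = 1 := finrank_span_singleton hP0
  have h9 := finrank_WH_le (v := v) hv
  have h10 := finrank_ker_phi2 (v := v) hv
  have hsq : d ^ 2 = d * d := sq d
  rw [hd2] at h6
  rw [← hS] at h7
  rw [h8] at h7
  omega
end

section
/- No two elements of a MIC in dimension 2 can be orthogonal under the Hilbert–Schmidt inner product: if {E_i}_{i=1}^{4} is a MIC on ℂ², then tr(E_i E_j) > 0 for all i, j. -/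
open Matrix BigOperators ComplexOrder

lemma stmt10_core {a11 a22 p q b11 b22 r s : ℝ}
    (h1 : 0 ≤ a11) (h2 : 0 ≤ a22) (h3 : 0 ≤ b11) (h4 : 0 ≤ b22)
    (h5 : p^2 + q^2 ≤ a11*a22) (h6 : r^2 + s^2 ≤ b11*b22)
    (h7 : a11*b11 + a22*b22 + 2*(p*r + q*s) ≤ 0) :
    a11*b11 = a22*b22 ∧ (b11+b22)*p + (a11+a22)*r = 0 ∧
      (b11+b22)*q + (a11+a22)*s = 0 := by
  have t1 : (b11+b22)^2 * (a11*a22 - (p^2+q^2)) ≥ 0 :=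
    mul_nonneg (sq_nonneg _) (by linarith)
  have t2 : (a11+a22)^2 * (b11*b22 - (r^2+s^2)) ≥ 0 :=
    mul_nonneg (sq_nonneg _) (by linarith)
  have t3 : ((a11+a22)*(b11+b22)) * (-(a11*b11 + a22*b22) - 2*(p*r+q*s)) ≥ 0 :=
    mul_nonneg (mul_nonneg (by linarith) (by linarith)) (by linarith)
  have id0 : ((b11+b22)*p + (a11+a22)*r)^2 + ((b11+b22)*q + (a11+a22)*s)^2
      + (a11*b11 - a22*b22)^2
      + ((b11+b22)^2 * (a11*a22 - (p^2+q^2)) + (a11+a22)^2 * (b11*b22 - (r^2+s^2))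
        + ((a11+a22)*(b11+b22)) * (-(a11*b11 + a22*b22) - 2*(p*r+q*s))) = 0 := by
    ring
  have n1 := sq_nonneg ((b11+b22)*p + (a11+a22)*r)
  have n2 := sq_nonneg ((b11+b22)*q + (a11+a22)*s)
  have n3 := sq_nonneg (a11*b11 - a22*b22)
  have s1 : ((b11+b22)*p + (a11+a22)*r)^2 = 0 := by linarith
  have s2 : ((b11+b22)*q + (a11+a22)*s)^2 = 0 := by linarith
  have s3 : (a11*b11 - a22*b22)^2 = 0 := by linarith
  exact ⟨by nlinarith [s3], pow_eq_zero_iff (n := 2) (by norm_num) |>.mp s1,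
    pow_eq_zero_iff (n := 2) (by norm_num) |>.mp s2⟩

lemma stmt10_psd_facts (A : Matrix (Fin 2) (Fin 2) ℂ) (hA : A.PosSemidef) :
    (A 0 0).im = 0 ∧ (A 1 1).im = 0 ∧ 0 ≤ (A 0 0).re ∧ 0 ≤ (A 1 1).re ∧
    (A 0 1).re^2 + (A 0 1).im^2 ≤ (A 0 0).re * (A 1 1).re ∧
    A 1 0 = (starRingEnd ℂ) (A 0 1) := by
  have herm := hA.1
  have h10 : A 1 0 = (starRingEnd ℂ) (A 0 1) := (herm.apply 1 0).symm
  have hd0 : 0 ≤ A 0 0 := hA.diag_nonneg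
  have hd1 : 0 ≤ A 1 1 := hA.diag_nonneg
  have h00 := (Complex.le_def.mp hd0)
  have h11 := (Complex.le_def.mp hd1)
  simp only [Complex.zero_re, Complex.zero_im] at h00 h11
  have hdet : A.det = (herm.eigenvalues 0 : ℂ) * (herm.eigenvalues 1 : ℂ) := by
    rw [herm.det_eq_prod_eigenvalues, Fin.prod_univ_two]; norm_num
  have hev0 := hA.eigenvalues_nonneg 0
  have hev1 := hA.eigenvalues_nonneg 1
  have hdet_re : 0 ≤ A.det.re := by
    rw [hdet]; simp [Complex.mul_re]; positivity
  have hdf : A.det = A 0 0 * A 1 1 - A 0 1 * A 1 0 := det_fin_two A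
  refine ⟨h00.2.symm, h11.2.symm, h00.1, h11.1, ?_, h10⟩
  rw [hdf, h10] at hdet_re
  simp only [Complex.sub_re, Complex.mul_re, Complex.conj_re, Complex.conj_im,
    ← h00.2, ← h11.2] at hdet_re
  nlinarith [hdet_re]

lemma stmt10_trace_mul_re_eq (A B : Matrix (Fin 2) (Fin 2) ℂ)
    (hA : A.PosSemidef) (hB : B.PosSemidef) :
    ((A * B).trace).re = (A 0 0).re*(B 0 0).re + (A 1 1).re*(B 1 1).re
      + 2*((A 0 1).re*(B 0 1).re + (A 0 1).im*(B 0 1).im) := by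
  obtain ⟨a0im, a1im, -, -, -, a10⟩ := stmt10_psd_facts A hA
  obtain ⟨b0im, b1im, -, -, -, b10⟩ := stmt10_psd_facts B hB
  simp [Matrix.trace_fin_two, Matrix.mul_apply, Fin.sum_univ_two, a10, b10,
    Complex.add_re, Complex.mul_re, a0im, a1im, b0im, b1im]
  ring

lemma stmt10_ortho_struct (A B : Matrix (Fin 2) (Fin 2) ℂ)
    (hA : A.PosSemidef) (hB : B.PosSemidef)
    (hAB : ((A * B).trace).re ≤ 0) :
    (B.trace.re) • A + (A.trace.re) • B
      = (A.trace.re * B.trace.re) • (1 : Matrix (Fin 2) (Fin 2) ℂ) := by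
  obtain ⟨a0im, a1im, a0, a1, adet, a10⟩ := stmt10_psd_facts A hA
  obtain ⟨b0im, b1im, b0, b1, bdet, b10⟩ := stmt10_psd_facts B hB
  rw [stmt10_trace_mul_re_eq A B hA hB] at hAB
  obtain ⟨C1, C2, C3⟩ := stmt10_core a0 a1 b0 b1 adet bdet hAB
  have hta : A.trace.re = (A 0 0).re + (A 1 1).re := by
    simp [Matrix.trace_fin_two, Complex.add_re]
  have htb : B.trace.re = (B 0 0).re + (B 1 1).re := by
    simp [Matrix.trace_fin_two, Complex.add_re]
  ext i j
  fin_cases i <;> fin_cases j <;>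
    · simp only [Matrix.add_apply, Matrix.smul_apply, Matrix.one_apply, hta, htb,
        a10, b10, Complex.real_smul]
      norm_num
      apply Complex.ext <;>
        simp [Complex.add_re, Complex.add_im, Complex.mul_re, Complex.mul_im,
          a10, b10, Complex.conj_re, Complex.conj_im, a0im, a1im, b0im, b1im] <;>
        linarith [C1, C2, C3]

lemma stmt10_psd_eq_zero (A : Matrix (Fin 2) (Fin 2) ℂ) (hA : A.PosSemidef)
    (h0 : (A 0 0).re = 0) (h1 : (A 1 1).re = 0) : A = 0 := by
  obtain ⟨a0im, a1im, a0, a1, adet, a10⟩ := stmt10_psd_facts A hA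
  have hp : (A 0 1).re = 0 ∧ (A 0 1).im = 0 := by
    constructor <;> nlinarith [sq_nonneg (A 0 1).re, sq_nonneg (A 0 1).im]
  ext i j
  fin_cases i <;> fin_cases j <;>
    simp_all [a10, Complex.ext_iff, Complex.conj_re, Complex.conj_im]

lemma stmt10_psd_trace_pos (A : Matrix (Fin 2) (Fin 2) ℂ) (hA : A.PosSemidef)
    (hne : A ≠ 0) : 0 < A.trace.re := by
  obtain ⟨a0im, a1im, a0, a1, adet, a10⟩ := stmt10_psd_facts A hA
  have hta : A.trace.re = (A 0 0).re + (A 1 1).re := by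
    simp [Matrix.trace_fin_two, Complex.add_re]
  rcases lt_or_eq_of_le (by rw [hta]; positivity : (0:ℝ) ≤ A.trace.re) with h | h
  · exact h
  · exact absurd
      (stmt10_psd_eq_zero A hA (by linarith [hta ▸ h.symm]) (by linarith [hta ▸ h.symm]))
      hne

lemma stmt10_self_trace_pos (A : Matrix (Fin 2) (Fin 2) ℂ) (hA : A.PosSemidef)
    (hne : A ≠ 0) (hle : ((A * A).trace).re ≤ 0) : False := by
  obtain ⟨a0im, a1im, a0, a1, adet, a10⟩ := stmt10_psd_facts A hA
  rw [stmt10_trace_mul_re_eq A A hA hA] at hle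
  have h0 : (A 0 0).re = 0 := by nlinarith [sq_nonneg (A 0 1).re, sq_nonneg (A 0 1).im]
  have h1 : (A 1 1).re = 0 := by nlinarith [sq_nonneg (A 0 1).re, sq_nonneg (A 0 1).im]
  exact hne (stmt10_psd_eq_zero A hA h0 h1)

/-- No two elements of a MIC in dimension 2 can be orthogonal
under the Hilbert–Schmidt inner product. -/
theorem stmt10 (E : Fin (2 ^ 2) → Matrix (Fin 2) (Fin 2) ℂ)
    (hMIC : IsMIC E) :
    ∀ i j, 0 < ((E i * E j).trace).re := by
  obtain ⟨hcard, hpsd, hsum, hli⟩ := hMIC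
  have hne : ∀ k, E k ≠ 0 := fun k => hli.ne_zero k
  intro i j
  by_contra hcon
  push_neg at hcon
  rcases eq_or_ne i j with rfl | hij
  · exact stmt10_self_trace_pos (E i) (hpsd i) (hne i) hcon
  · have key := stmt10_ortho_struct (E i) (E j) (hpsd i) (hpsd j) hcon
    set α := (E i).trace.re with hαdef
    set β := (E j).trace.re with hβdef
    have hα : 0 < α := stmt10_psd_trace_pos _ (hpsd i) (hne i)
    have hβ : 0 < β := stmt10_psd_trace_pos _ (hpsd j) (hne j)
    set g : Fin (2^2) → ℝ :=
      fun k => α*β - (if k = i then β else 0) - (if k = j then α else 0) with hg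
    have hrel : ∑ k, g k • E k = 0 := by
      have expand : ∑ k, g k • E k
          = (α*β) • (∑ k, E k) - (β • E i + α • E j) := by
        simp only [hg, sub_smul, ite_smul, zero_smul, Finset.sum_sub_distrib,
          Finset.sum_ite_eq', Finset.mem_univ, if_true, Finset.smul_sum]
        abel
      rw [expand, hsum, key]
      abel
    have hall := Fintype.linearIndependent_iff.mp hli g hrel
    obtain ⟨k, hki, hkj⟩ : ∃ k : Fin (2^2), k ≠ i ∧ k ≠ j := by
      by_contra hc
      push_neg at hc
      have hsub : (Finset.univ : Finset (Fin (2^2))) ⊆ {i, j} := fun k _ => by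
        rcases eq_or_ne k i with h | h
        · simp [h]
        · simp [hc k h]
      have hle := Finset.card_le_card hsub
      have h2 : ({i, j} : Finset (Fin (2^2))).card ≤ 2 :=
        (Finset.card_insert_le _ _).trans (by simp)
      simp [Finset.card_univ] at hle
      omega
    have := hall k
    rw [hg] at this
    simp only [if_neg hki, if_neg hkj, sub_zero] at this
    nlinarith
end

section
/- Let |φ_1⟩,...,|φ_N⟩ be unit vectors in ℂ^d and e_1,...,e_N ∈ [0,1]. The operators E_i = e_i |φ_i⟩⟨φ_i| form a POVM (i.e., Σ_i E_i = I) if and only if the N×N Gram matrix g of the rescaled vectors √e_i |φ_i⟩, with entries g_ij = √(e_i e_j) ⟨φ_i|φ_j⟩, is a projection matrix of rank d. -/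
open Matrix ComplexOrder

lemma isUnit_of_rank_eq_card {n : ℕ} (B : Matrix (Fin n) (Fin n) ℂ) (h : B.rank = n) :
    IsUnit B := by
  have hsurj : Function.Surjective B.mulVecLin := by
    rw [← LinearMap.range_eq_top]
    apply Submodule.eq_top_of_finrank_eq
    rw [Matrix.rank] at h
    simp [h]
  have hinj : Function.Injective B.mulVecLin :=
    (LinearMap.injective_iff_surjective).mpr hsurj
  have hU : IsUnit (Matrix.toLinAlgEquiv' B) := by
    rw [Module.End.isUnit_iff]
    exact ⟨hinj, hsurj⟩
  have := hU.map (Matrix.toLinAlgEquiv' (R := ℂ) (n := Fin n)).symm.toRingHom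
  simpa using this

/-- unit vectors `φ i` and weights `e i ∈ [0,1]` give a rank-1
POVM `E i = e i • |φ i⟩⟨φ i|` iff the Gram matrix `g` of the rescaled vectors
`√(e i) • φ i` is a projection of rank `d`. -/
theorem stmt11 {d N : ℕ} (hd : 0 < d) (φ : Fin N → (Fin d → ℂ))
    (hφ : ∀ i, star (φ i) ⬝ᵥ φ i = 1)
    (e : Fin N → ℝ) (he : ∀ i, e i ∈ Set.Icc (0 : ℝ) 1)
    (g : Matrix (Fin N) (Fin N) ℂ)
    (hg : ∀ i j, g i j = (Real.sqrt (e i) * Real.sqrt (e j) : ℝ) * (star (φ i) ⬝ᵥ φ j)) :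
    (∑ i, (e i : ℂ) • Matrix.vecMulVec (φ i) (star (φ i)) = 1) ↔
      (g * g = g ∧ g.rank = d) := by
  set A : Matrix (Fin d) (Fin N) ℂ := fun k i => (Real.sqrt (e i) : ℂ) * φ i k with hA
  have hA1 : A * Aᴴ = ∑ i, (e i : ℂ) • Matrix.vecMulVec (φ i) (star (φ i)) := by
    ext k l
    simp only [Matrix.mul_apply, Matrix.conjTranspose_apply]
    simp only [Matrix.mul_apply, Matrix.conjTranspose_apply, hA, Matrix.sum_apply,
      Matrix.smul_apply, Matrix.vecMulVec_apply, Pi.star_apply, smul_eq_mul,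
      star_mul', RCLike.star_def, Complex.conj_ofReal]
    congr 1; ext i
    have : (Real.sqrt (e i) : ℂ) * Real.sqrt (e i) = (e i : ℂ) := by
      rw [← Complex.ofReal_mul, Real.mul_self_sqrt (he i).1]
    linear_combination (φ i k * (starRingEnd ℂ) (φ i l)) * this
  have hA2 : Aᴴ * A = g := by
    ext i j
    simp only [Matrix.mul_apply, Matrix.conjTranspose_apply]
    simp only [Matrix.mul_apply, Matrix.conjTranspose_apply, hA, hg, dotProduct,
      Pi.star_apply, star_mul', RCLike.star_def, Complex.conj_ofReal]
    rw [Complex.ofReal_mul, Finset.mul_sum]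
    congr 1; ext k
    ring
  constructor
  · intro h
    rw [← hA1] at h
    constructor
    · rw [← hA2]
      calc Aᴴ * A * (Aᴴ * A) = Aᴴ * (A * Aᴴ) * A := by simp only [Matrix.mul_assoc]
        _ = Aᴴ * A := by rw [h]; simp [Matrix.mul_assoc]
    · rw [← hA2, Matrix.rank_conjTranspose_mul_self, ← Matrix.rank_self_mul_conjTranspose, h,
        Matrix.rank_one, Fintype.card_fin]
  · rintro ⟨hp, hr⟩
    set B := A * Aᴴ with hB
    have hrB : B.rank = d := by
      rw [hB, Matrix.rank_self_mul_conjTranspose, ← Matrix.rank_conjTranspose_mul_self, hA2, hr]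
    have hU : IsUnit B := isUnit_of_rank_eq_card B hrB
    have h3 : B * B * B = B * B := by
      have : B * B * B = A * (g * g) * Aᴴ := by
        rw [← hA2]; simp only [hB, Matrix.mul_assoc]
      rw [this, hp, ← hA2]
      simp only [hB, Matrix.mul_assoc]
    have hB1 : B = 1 := by
      have := (hU.mul hU).mul_left_cancel (by rw [mul_one]; exact h3 : B * B * B = B * B * 1)
      exact this
    rw [← hA1]; exact hB1
end

section
/- Among unbiased MICs, the squared Frobenius distance between the MIC's Gram matrix G and the diagonal matrix (1/d)I satisfies Σ_ij ((1/d)δ_ij − tr(E_i E_j))² ≥ (d−1)/(d+1), with equality if and only if the MIC is a SIC (rank-1 and equiangular with tr(E_i E_j) = (dδ_ij+1)/(d²(d+1))). -/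
open Matrix BigOperators ComplexOrder

lemma traces_eig {d : ℕ} {A : Matrix (Fin d) (Fin d) ℂ} (hA : A.IsHermitian) :
    A.trace = ∑ i, (hA.eigenvalues i : ℂ) ∧
    (A * A).trace = ((∑ i, (hA.eigenvalues i) ^ 2 : ℝ) : ℂ) := by
  set U : Matrix (Fin d) (Fin d) ℂ := ↑hA.eigenvectorUnitary
  set D : Matrix (Fin d) (Fin d) ℂ := diagonal (RCLike.ofReal ∘ hA.eigenvalues)
  have hU : star U * U = 1 := by exact_mod_cast Unitary.coe_star_mul_self hA.eigenvectorUnitary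
  have hspec : A = U * D * star U := hA.spectral_theorem
  have key : ∀ X : Matrix (Fin d) (Fin d) ℂ, (U * X * star U).trace = X.trace := by
    intro X
    rw [trace_mul_cycle, hU, one_mul]
  constructor
  · conv_lhs => rw [hspec]
    rw [key]
    simp [D, trace_diagonal]
  · have h2 : A * A = U * (D * D) * star U := by
      conv_lhs => rw [hspec]
      calc U * D * star U * (U * D * star U) = U * (D * (star U * U) * D) * star U := by
            noncomm_ring
        _ = U * (D * D) * star U := by rw [hU]; simp
    rw [h2, key]
    simp [D, diagonal_mul_diagonal, trace_diagonal, sq]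


lemma scalar_purity {d : ℕ} (lam : Fin d → ℝ) (h0 : ∀ i, 0 ≤ lam i) {s : ℝ} (hs : 0 < s)
    (hsum : ∑ i, lam i = s) :
    ∑ i, (lam i) ^ 2 ≤ s ^ 2 ∧
      (∑ i, (lam i) ^ 2 = s ^ 2 → Fintype.card {i // lam i ≠ 0} = 1) := by
  have hle : ∀ i, lam i ≤ s := fun i =>
    hsum ▸ Finset.single_le_sum (fun j _ => h0 j) (Finset.mem_univ i)
  have step : ∀ i ∈ Finset.univ, (lam i) ^ 2 ≤ lam i * s := by
    intro i _
    rw [sq]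
    exact mul_le_mul_of_nonneg_left (hle i) (h0 i)
  have hsum2 : ∑ i, lam i * s = s ^ 2 := by
    rw [← Finset.sum_mul, hsum, sq]
  constructor
  · calc ∑ i, (lam i) ^ 2 ≤ ∑ i, lam i * s := Finset.sum_le_sum step
      _ = s ^ 2 := hsum2
  · intro heq
    have hzero : ∑ i, (lam i * s - (lam i) ^ 2) = 0 := by
      rw [Finset.sum_sub_distrib, hsum2, heq, sub_self]
    have hall : ∀ i ∈ Finset.univ, lam i * s - (lam i) ^ 2 = 0 :=
      (Finset.sum_eq_zero_iff_of_nonneg (fun i hi => sub_nonneg.2 (step i hi))).1 hzero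
    have hdich : ∀ i, lam i = 0 ∨ lam i = s := by
      intro i
      have := hall i (Finset.mem_univ i)
      have h2 : lam i * (s - lam i) = 0 := by ring_nf; ring_nf at this; linarith
      rcases mul_eq_zero.1 h2 with h | h
      · exact Or.inl h
      · exact Or.inr (by linarith)
    have hfs : ∑ i ∈ Finset.univ.filter (fun i => lam i ≠ 0), lam i = s := by
      rw [Finset.sum_filter_ne_zero, hsum]
    have hval : ∀ i ∈ Finset.univ.filter (fun i => lam i ≠ 0), lam i = s := by
      intro i hi
      rcases hdich i with h | h
      · exact absurd h (Finset.mem_filter.1 hi).2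
      · exact h
    rw [Finset.sum_congr rfl hval, Finset.sum_const, nsmul_eq_mul] at hfs
    have hcard : ((Finset.univ.filter (fun i => lam i ≠ 0)).card : ℝ) = 1 :=
      mul_right_cancel₀ hs.ne' (by rw [hfs, one_mul])
    rw [Fintype.card_subtype]
    exact_mod_cast hcard


lemma purity_bound {d : ℕ} (hd : 0 < d) {A : Matrix (Fin d) (Fin d) ℂ} (hA : A.PosSemidef)
    (htr : A.trace = (1 / d : ℂ)) :
    ((A * A).trace).re ≤ 1 / (d : ℝ) ^ 2 ∧
      (((A * A).trace).re = 1 / (d : ℝ) ^ 2 → A.rank = 1) := by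
  obtain ⟨h1, h2⟩ := traces_eig hA.1
  have hs : ∑ i, hA.1.eigenvalues i = 1 / (d : ℝ) := by
    have h3 := congrArg Complex.re (h1.symm.trans htr)
    have h4 : ((1 : ℂ) / d).re = 1 / (d : ℝ) := by
      rw [show ((1 : ℂ) / d) = ((1 / d : ℝ) : ℂ) by push_cast; ring]
      exact Complex.ofReal_re _
    rw [h4] at h3
    rw [← h3]
    simp [Complex.re_sum]
  have hre : ((A * A).trace).re = ∑ i, (hA.1.eigenvalues i) ^ 2 := by
    rw [h2, Complex.ofReal_re]
  have hspos : (0 : ℝ) < 1 / (d : ℝ) := by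
    have : (0:ℝ) < d := by exact_mod_cast hd
    positivity
  obtain ⟨hle, heq⟩ := scalar_purity _ hA.eigenvalues_nonneg hspos hs
  have hsq : (1 / (d : ℝ)) ^ 2 = 1 / (d : ℝ) ^ 2 := by rw [div_pow, one_pow]
  constructor
  · rw [hre, ← hsq]; exact hle
  · intro h
    rw [hA.1.rank_eq_card_non_zero_eigs]
    exact heq (by rw [← hre, h, hsq])


set_option maxHeartbeats 1600000 in
/-- for an unbiased MIC, the squared Frobenius distance between
its Gram matrix and `(1/d)·I` is at least `(d−1)/(d+1)`, with equality iff the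
MIC is a SIC (rank-1 and equiangular with `tr(E i E j) = (dδ_ij+1)/(d²(d+1))`). -/
theorem stmt18 {d : ℕ} (hd : 0 < d)
    (E : Fin (d ^ 2) → Matrix (Fin d) (Fin d) ℂ) (hMIC : IsMIC E)
    (hunb : ∀ i, (E i).trace = (1 / d : ℂ)) :
    ((d : ℝ) - 1) / (d + 1) ≤
      ∑ i, ∑ j, ((1 / d) * (if i = j then 1 else 0) - ((E i * E j).trace).re) ^ 2 ∧
    ((∑ i, ∑ j, ((1 / d) * (if i = j then 1 else 0) - ((E i * E j).trace).re) ^ 2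
        = ((d : ℝ) - 1) / (d + 1)) ↔
      ((∀ i, (E i).rank = 1) ∧
        ∀ i j, ((E i * E j).trace).re =
          ((d : ℝ) * (if i = j then 1 else 0) + 1) / (d ^ 2 * (d + 1)))) := by
  obtain ⟨hcard, hpsd, hsum, hli⟩ := hMIC
  obtain ⟨G, hG⟩ : ∃ G : Fin (d ^ 2) → Fin (d ^ 2) → ℝ,
      G = fun i j => ((E i * E j).trace).re := ⟨_, rfl⟩
  have hGapp : ∀ i j, ((E i * E j).trace).re = G i j := fun i j => by rw [hG]
  simp only [hGapp]
  have hdR : (0 : ℝ) < d := by exact_mod_cast hd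
  have hdne : (d : ℝ) ≠ 0 := hdR.ne'
  have hd1ne : (d : ℝ) + 1 ≠ 0 := by positivity
  -- row sums
  have hrow : ∀ i, ∑ j, G i j = 1 / (d : ℝ) := by
    intro i
    have h1 : ∑ j, (E i * E j) = E i := by rw [← Finset.mul_sum, hsum, mul_one]
    have h2 : ∑ j, (E i * E j).trace = (1 / d : ℂ) := by
      rw [← trace_sum, h1, hunb]
    calc ∑ j, G i j = (∑ j, (E i * E j).trace).re := by
          simp only [hGapp, Complex.re_sum]
      _ = 1 / (d : ℝ) := by rw [h2]; simp
  -- total sum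
  have htot : ∑ i, ∑ j, G i j = (d : ℝ) := by
    rw [Finset.sum_congr rfl (fun i _ => hrow i), Finset.sum_const, nsmul_eq_mul,
      Finset.card_univ, Fintype.card_fin]
    push_cast
    field_simp
  have hdiag_le : ∀ i, G i i ≤ 1 / (d : ℝ) ^ 2 := by
    intro i
    rw [← hGapp]
    exact (purity_bound hd (hpsd i) (hunb i)).1
  obtain ⟨t, htdef⟩ : ∃ x : ℝ, x = ∑ i, G i i := ⟨_, rfl⟩
  have ht_le : t ≤ 1 := by
    rw [htdef]
    calc (∑ i, G i i) ≤ ∑ _i : Fin (d ^ 2), 1 / (d : ℝ) ^ 2 :=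
        Finset.sum_le_sum (fun i _ => hdiag_le i)
      _ = 1 := by
        rw [Finset.sum_const, nsmul_eq_mul, Finset.card_univ, Fintype.card_fin]
        push_cast
        field_simp
  rcases Nat.lt_or_ge d 2 with hdlt | hd2
  · -- d = 1 case
    have hd1' : d = 1 := by omega
    subst hd1'
    haveI : Subsingleton (Fin (1 ^ 2)) := ⟨fun a b => Fin.ext (by omega)⟩
    have hEall : ∀ i, E i = 1 := by
      intro i
      have h1 : ∑ k, E k = E i :=
        Finset.sum_eq_single_of_mem i (Finset.mem_univ i)
          (fun b _ hb => absurd (Subsingleton.elim b i) hb)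
      rw [← h1, hsum]
    have hGval : ∀ i j, G i j = 1 := by
      intro i j
      rw [← hGapp, hEall i, hEall j]
      simp
    have hS0 : ∑ i, ∑ j, ((1 / ((1:ℕ) : ℝ)) * (if i = j then 1 else 0) - G i j) ^ 2 = 0 := by
      apply Finset.sum_eq_zero
      intro i _
      apply Finset.sum_eq_zero
      intro j _
      rw [hGval i j, Subsingleton.elim i j]
      norm_num
    refine ⟨by rw [hS0]; norm_num, ?_, fun _ => by rw [hS0]; norm_num⟩
    intro _
    constructor
    · intro i
      rw [hEall i, Matrix.rank_one]
      simp
    · intro i j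
      rw [hGval i j, Subsingleton.elim i j]
      norm_num
  · -- d ≥ 2
    have hdR2 : (2 : ℝ) ≤ (d : ℝ) := by exact_mod_cast hd2
    have hNpos : (0 : ℝ) < (d : ℝ) ^ 2 - 1 := by nlinarith
    have hNne : (d : ℝ) ^ 2 - 1 ≠ 0 := hNpos.ne'
    obtain ⟨μ, hμdef⟩ : ∃ x : ℝ, x = (t - 1 / d) / ((d : ℝ) ^ 2 - 1) := ⟨_, rfl⟩
    obtain ⟨c, hcdef⟩ : ∃ x : ℝ, x = (1 / (d : ℝ) - μ) / (d : ℝ) ^ 2 := ⟨_, rfl⟩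
    obtain ⟨b, hbapp⟩ : ∃ b : Fin (d ^ 2) → Fin (d ^ 2) → ℝ,
        ∀ i j, b i j = G i j - c - (if i = j then μ else 0) :=
      ⟨fun i j => G i j - c - (if i = j then μ else 0), fun _ _ => rfl⟩
    obtain ⟨A2, hA2def⟩ : ∃ x : ℝ, x = ∑ i, ∑ j, G i j ^ 2 := ⟨_, rfl⟩
    -- expansion of S
    have point1 : ∀ i j : Fin (d ^ 2), ((1 / (d : ℝ)) * (if i = j then 1 else 0) - G i j) ^ 2
        = G i j ^ 2 - (2 / d) * (if i = j then G i j else 0)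
          + (1 / (d : ℝ) ^ 2) * (if i = j then 1 else 0) := by
      intro i j
      split_ifs with h
      · field_simp
        ring
      · ring
    have inner1 : ∀ i : Fin (d ^ 2), ∑ j, ((1 / (d : ℝ)) * (if i = j then 1 else 0) - G i j) ^ 2
        = (∑ j, G i j ^ 2) - (2 / d) * G i i + 1 / (d : ℝ) ^ 2 := by
      intro i
      rw [Finset.sum_congr rfl (fun j _ => point1 i j), Finset.sum_add_distrib,
        Finset.sum_sub_distrib, ← Finset.mul_sum, ← Finset.mul_sum]
      simp [Finset.sum_ite_eq]
    have hSexp : ∑ i, ∑ j, ((1 / (d : ℝ)) * (if i = j then 1 else 0) - G i j) ^ 2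
        = A2 - (2 / d) * t + 1 := by
      rw [Finset.sum_congr rfl (fun i _ => inner1 i), Finset.sum_add_distrib,
        Finset.sum_sub_distrib, ← Finset.mul_sum, Finset.sum_const, nsmul_eq_mul,
        Finset.card_univ, Fintype.card_fin, ← hA2def, ← htdef]
      push_cast
      field_simp
    -- expansion of B2
    have point2 : ∀ i j : Fin (d ^ 2), b i j ^ 2
        = G i j ^ 2 + c ^ 2 + (if i = j then μ ^ 2 else 0) - 2 * c * G i j
          - 2 * μ * (if i = j then G i j else 0) + 2 * c * μ * (if i = j then 1 else 0) := by
      intro i j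
      rw [hbapp]
      split_ifs with h <;> ring
    have inner2 : ∀ i : Fin (d ^ 2), ∑ j, b i j ^ 2
        = (∑ j, G i j ^ 2) + (d : ℝ) ^ 2 * c ^ 2 + μ ^ 2 - 2 * c * (1 / d)
          - 2 * μ * G i i + 2 * c * μ := by
      intro i
      rw [Finset.sum_congr rfl (fun j _ => point2 i j)]
      rw [Finset.sum_add_distrib, Finset.sum_sub_distrib, Finset.sum_sub_distrib,
        Finset.sum_add_distrib, Finset.sum_add_distrib, ← Finset.mul_sum, ← Finset.mul_sum,
        ← Finset.mul_sum, hrow i]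
      simp only [Finset.sum_ite_eq, Finset.mem_univ, if_true, Finset.sum_const,
        Finset.card_univ, Fintype.card_fin, nsmul_eq_mul]
      push_cast
      ring
    obtain ⟨B2, hB2def⟩ : ∃ x : ℝ, x = ∑ i, ∑ j, b i j ^ 2 := ⟨_, rfl⟩
    have hB2exp : B2 = A2 + (d : ℝ) ^ 4 * c ^ 2 + (d : ℝ) ^ 2 * μ ^ 2 - 2 * c * (d : ℝ)
        - 2 * μ * t + 2 * c * μ * (d : ℝ) ^ 2 := by
      rw [hB2def, Finset.sum_congr rfl (fun i _ => inner2 i)]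
      simp only [Finset.sum_add_distrib, Finset.sum_sub_distrib, ← Finset.mul_sum,
        Finset.sum_const, Finset.card_univ, Fintype.card_fin, nsmul_eq_mul]
      rw [← hA2def, ← htdef]
      push_cast
      field_simp
    -- the key identity
    have hkey : ∑ i, ∑ j, ((1 / (d : ℝ)) * (if i = j then 1 else 0) - G i j) ^ 2
        = ((d : ℝ) - 1) / ((d : ℝ) + 1) + B2 + (1 - t) ^ 2 / ((d : ℝ) ^ 2 - 1)
          + 2 * (1 - t) / ((d : ℝ) + 1) := by
      rw [hSexp, hB2exp, hcdef, hμdef]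
      field_simp
      ring
    have hB2nonneg : 0 ≤ B2 := by
      rw [hB2def]
      exact Finset.sum_nonneg (fun i _ => Finset.sum_nonneg (fun j _ => sq_nonneg _))
    have h3nonneg : 0 ≤ (1 - t) ^ 2 / ((d : ℝ) ^ 2 - 1) := by positivity
    have h4nonneg : 0 ≤ 2 * (1 - t) / ((d : ℝ) + 1) := by
      apply div_nonneg _ (by linarith)
      linarith
    refine ⟨by rw [hkey]; linarith, ?_, ?_⟩
    · -- equality → SIC
      intro hEq
      rw [hkey] at hEq
      have h40 : 2 * (1 - t) / ((d : ℝ) + 1) = 0 := by linarith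
      have ht1 : t = 1 := by
        rcases div_eq_zero_iff.1 h40 with h | h
        · linarith
        · exact absurd h hd1ne
      have h30 : (1 - t) ^ 2 / ((d : ℝ) ^ 2 - 1) = 0 := by rw [ht1]; simp
      have hB20 : B2 = 0 := by
        rw [ht1] at hEq
        rw [ht1] at h30 h40
        linarith
      have hb0 : ∀ i j, b i j = 0 := by
        intro i j
        rw [hB2def] at hB20
        have h1 : ∀ i ∈ (Finset.univ : Finset (Fin (d ^ 2))), (0:ℝ) ≤ ∑ j, b i j ^ 2 :=
          fun i _ => Finset.sum_nonneg (fun j _ => sq_nonneg _)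
        have h2 := (Finset.sum_eq_zero_iff_of_nonneg h1).1 hB20 i (Finset.mem_univ i)
        have h3 := (Finset.sum_eq_zero_iff_of_nonneg
          (fun j _ => sq_nonneg (b i j))).1 h2 j (Finset.mem_univ j)
        exact pow_eq_zero_iff two_ne_zero |>.1 h3
      have hGval : ∀ i j, G i j =
          ((d : ℝ) * (if i = j then 1 else 0) + 1) / ((d : ℝ) ^ 2 * ((d : ℝ) + 1)) := by
        intro i j
        have h := hb0 i j
        rw [hbapp] at h
        have hGij : G i j = c + (if i = j then μ else 0) := by linarith
        rw [hGij, hcdef, hμdef, ht1]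
        split_ifs with h'
        · field_simp
          ring
        · field_simp
          ring
      refine ⟨?_, hGval⟩
      intro i
      apply (purity_bound hd (hpsd i) (hunb i)).2
      rw [hGapp i i, hGval i i]
      simp only [if_true]
      field_simp
    · -- SIC → equality
      rintro ⟨-, hform⟩
      have point3 : ∀ i j : Fin (d ^ 2),
          ((1 / (d : ℝ)) * (if i = j then 1 else 0) - G i j) ^ 2
          = (1 / ((d : ℝ) ^ 2 * ((d : ℝ) + 1))) ^ 2
            + (if i = j then (((d : ℝ) - 1) / (d : ℝ) ^ 2) ^ 2
                - (1 / ((d : ℝ) ^ 2 * ((d : ℝ) + 1))) ^ 2 else 0) := by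
        intro i j
        rw [hform i j]
        split_ifs with h
        · field_simp
          ring
        · ring
      rw [Finset.sum_congr rfl (fun i _ => Finset.sum_congr rfl (fun j _ => point3 i j))]
      simp only [Finset.sum_add_distrib, Finset.sum_ite_eq, Finset.mem_univ, if_true,
        Finset.sum_const, Finset.card_univ, Fintype.card_fin, nsmul_eq_mul]
      push_cast
      field_simp
      ring
end
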